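/- For each parameter c₁ ∈ ℂ, the family of vector potentials on ℂ³ given by A¹ = (1/8)(12c₁²+7c₁+1)u₁⁴ - (1/8)(24c₁+6)u₂u₁² + u₃u₁ + (3/4)u₂², A² = (1/20)(12c₁³+15c₁²+3c₁)u₁⁵ - (1/2)c₁u₂u₁³ - (3/2)c₁u₂²u₁ + u₃u₂, A³ = (1/2)u₃² - (1/80)(96c₁⁴+96c₁³+36c₁²+6c₁)u₁⁶ + (9/2)c₁(c₁+1/2)(c₁+1/4)u₂u₁⁴ - (9/2)c₁(c₁+1/2)u₂²u₁² + (3/4)c₁u₂³ + (3/8)u₂³ satisfies the oriented associativity equations with unit e = ∂/∂u₃, and the structure constants cⁱ_{jk} = ∂_j∂_kA^i admit a compatible constant invariant metric η (with η_{il}cˡ_{jk} totally symmetric) if and only if c₁ = -1/4. -/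

import Mathlib

open scoped BigOperators

/-- Partial derivative in the `i`-th coordinate direction on `ℂⁿ`. -/
noncomputable def pd {n : ℕ} (i : Fin n) (f : (Fin n → ℂ) → ℂ) (p : Fin n → ℂ) : ℂ :=
  fderiv ℂ f p (Pi.single i 1)

/-- Second partial derivative `∂_i ∂_j f`. -/
noncomputable def sd {n : ℕ} (i j : Fin n) (f : (Fin n → ℂ) → ℂ) (p : Fin n → ℂ) : ℂ :=
  pd i (pd j f) p

/-- The one-parameter family (parameter `c₁`) of vector potentials on the orbit space of
the Shephard group `G₂₆`. -/
noncomputable def AG26 (c₁ : ℂ) : Fin 3 → (Fin 3 → ℂ) → ℂ :=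
  ![fun p => (1/8) * (12*c₁^2 + 7*c₁ + 1) * (p 0)^4
      - (1/8) * (24*c₁ + 6) * (p 1) * (p 0)^2 + p 2 * p 0 + (3/4) * (p 1)^2,
    fun p => (1/20) * (12*c₁^3 + 15*c₁^2 + 3*c₁) * (p 0)^5
      - (1/2) * c₁ * (p 1) * (p 0)^3 - (3/2) * c₁ * (p 1)^2 * (p 0) + p 2 * p 1,
    fun p => (1/2) * (p 2)^2 - (1/80) * (96*c₁^4 + 96*c₁^3 + 36*c₁^2 + 6*c₁) * (p 0)^6
      + (9/2) * c₁ * (c₁ + 1/2) * (c₁ + 1/4) * (p 1) * (p 0)^4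
      - (9/2) * c₁ * (c₁ + 1/2) * (p 1)^2 * (p 0)^2
      + (3/4) * c₁ * (p 1)^3 + (3/8) * (p 1)^3]

/-- Structure constants `cⁱ_{jk} = ∂_j∂_k A^i` of the `G₂₆` family. -/
noncomputable def cG26 (c₁ : ℂ) (i j k : Fin 3) (p : Fin 3 → ℂ) : ℂ := sd j k (AG26 c₁ i) p

/-- auxiliary: Kronecker delta coming from `Pi.single`. -/
noncomputable def sgl (j m : Fin 3) : ℂ := (Pi.single j 1 : Fin 3 → ℂ) m

lemma sgl_eq (j m : Fin 3) : sgl j m = if m = j then 1 else 0 := by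
  simp [sgl, Pi.single_apply]

lemma pd_calc {f : (Fin 3 → ℂ) → ℂ} {f' : (Fin 3 → ℂ) →L[ℂ] ℂ} {p : Fin 3 → ℂ}
    (h : HasFDerivAt f f' p) (k : Fin 3) : pd k f p = f' (Pi.single k 1) := by
  rw [pd, h.fderiv]

lemma hproj (j : Fin 3) (p : Fin 3 → ℂ) :
    HasFDerivAt (fun q : Fin 3 → ℂ => q j)
      (ContinuousLinearMap.proj j : (Fin 3 → ℂ) →L[ℂ] ℂ) p :=
  (ContinuousLinearMap.proj j : (Fin 3 → ℂ) →L[ℂ] ℂ).hasFDerivAt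

lemma hpow {f : (Fin 3 → ℂ) → ℂ} {f' : (Fin 3 → ℂ) →L[ℂ] ℂ} {p : Fin 3 → ℂ}
    (h : HasFDerivAt f f' p) (n : ℕ) :
    HasFDerivAt (fun q => f q ^ n) ((↑n * f p ^ (n - 1)) • f') p :=
  (hasDerivAt_pow n (f p)).comp_hasFDerivAt p h

lemma cG26_eq₀ (c₁ : ℂ) (j k : Fin 3) (p : Fin 3 → ℂ) :
    cG26 c₁ 0 j k p =
      ((3/2)*(12*c₁^2+7*c₁+1)*(p 0)^2 - (1/4)*(24*c₁+6)*(p 1)) * (sgl j 0 * sgl k 0)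
      + (-(1/4)*(24*c₁+6)*(p 0)) * (sgl j 0 * sgl k 1 + sgl j 1 * sgl k 0)
      + (sgl j 0 * sgl k 2 + sgl j 2 * sgl k 0)
      + (3/2) * (sgl j 1 * sgl k 1) := by
  have h1 : ∀ q : Fin 3 → ℂ, pd k (AG26 c₁ 0) q =
      ((1/2)*(12*c₁^2+7*c₁+1)*(q 0)^3 - (1/4)*(24*c₁+6)*(q 0)*(q 1) + q 2) * sgl k 0
      + ((3/2)*(q 1) - (1/8)*(24*c₁+6)*(q 0)^2) * sgl k 1
      + (q 0) * sgl k 2 := by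
    intro q
    have hA : HasFDerivAt (AG26 c₁ 0) _ q :=
      ((((hpow (hproj 0 q) 4).const_mul ((1/8)*(12*c₁^2+7*c₁+1))).sub
          (((hproj 1 q).const_mul ((1/8)*(24*c₁+6))).mul (hpow (hproj 0 q) 2))).add
        ((hproj 2 q).mul (hproj 0 q))).add
        ((hpow (hproj 1 q) 2).const_mul (3/4))
    refine (pd_calc hA k).trans ?_
    simp [sgl, ContinuousLinearMap.add_apply, ContinuousLinearMap.smul_apply,
      ContinuousLinearMap.proj_apply, ContinuousLinearMap.smulRight_apply,
      ContinuousLinearMap.coe_sub', Pi.sub_apply, smul_eq_mul]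
    ring
  have h2 : pd k (AG26 c₁ 0) = fun q =>
      ((1/2)*(12*c₁^2+7*c₁+1)*(q 0)^3 - (1/4)*(24*c₁+6)*(q 0)*(q 1) + q 2) * sgl k 0
      + ((3/2)*(q 1) - (1/8)*(24*c₁+6)*(q 0)^2) * sgl k 1
      + (q 0) * sgl k 2 := funext h1
  show pd j (pd k (AG26 c₁ 0)) p = _
  rw [h2]
  have hB : HasFDerivAt (fun q : Fin 3 → ℂ =>
      ((1/2)*(12*c₁^2+7*c₁+1)*(q 0)^3 - (1/4)*(24*c₁+6)*(q 0)*(q 1) + q 2) * sgl k 0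
      + ((3/2)*(q 1) - (1/8)*(24*c₁+6)*(q 0)^2) * sgl k 1
      + (q 0) * sgl k 2) _ p :=
    (((((hpow (hproj 0 p) 3).const_mul ((1/2)*(12*c₁^2+7*c₁+1))).sub
          (((hproj 0 p).const_mul ((1/4)*(24*c₁+6))).mul (hproj 1 p))).add
        (hproj 2 p)).mul_const (sgl k 0)).add
      ((((hproj 1 p).const_mul (3/2)).sub
          ((hpow (hproj 0 p) 2).const_mul ((1/8)*(24*c₁+6)))).mul_const (sgl k 1)) |>.add
      ((hproj 0 p).mul_const (sgl k 2))
  refine (pd_calc hB j).trans ?_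
  simp [sgl, ContinuousLinearMap.add_apply, ContinuousLinearMap.smul_apply,
    ContinuousLinearMap.proj_apply, ContinuousLinearMap.smulRight_apply,
    ContinuousLinearMap.coe_sub', Pi.sub_apply, smul_eq_mul]
  ring

lemma sgl00 : sgl 0 0 = 1 := by simp [sgl]
lemma sgl01 : sgl 0 1 = 0 := by simp [sgl]
lemma sgl02 : sgl 0 2 = 0 := by simp [sgl]
lemma sgl10 : sgl 1 0 = 0 := by simp [sgl]
lemma sgl11 : sgl 1 1 = 1 := by simp [sgl]
lemma sgl12 : sgl 1 2 = 0 := by simp [sgl]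
lemma sgl20 : sgl 2 0 = 0 := by simp [sgl]
lemma sgl21 : sgl 2 1 = 0 := by simp [sgl]
lemma sgl22 : sgl 2 2 = 1 := by simp [sgl]

lemma cG26_eq₁ (c₁ : ℂ) (j k : Fin 3) (p : Fin 3 → ℂ) :
    cG26 c₁ 1 j k p =
      ((12*c₁^3+15*c₁^2+3*c₁)*(p 0)^3 - 3*c₁*(p 0)*(p 1)) * (sgl j 0 * sgl k 0)
      + (-(3/2)*c₁*(p 0)^2 - 3*c₁*(p 1)) * (sgl j 0 * sgl k 1 + sgl j 1 * sgl k 0)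
      + (-3*c₁*(p 0)) * (sgl j 1 * sgl k 1)
      + (sgl j 1 * sgl k 2 + sgl j 2 * sgl k 1) := by
  have h2 : pd k (AG26 c₁ 1) = fun q : Fin 3 → ℂ =>
      ((1/4)*(12*c₁^3+15*c₁^2+3*c₁)*(q 0)^4 - (3/2)*c₁*(q 0)^2*(q 1)
        - (3/2)*c₁*(q 1)^2) * sgl k 0
      + (q 2 - (1/2)*c₁*(q 0)^3 - 3*c₁*(q 0)*(q 1)) * sgl k 1
      + (q 1) * sgl k 2 := by
    funext q
    have hA : HasFDerivAt (AG26 c₁ 1) _ q :=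
      ((((hpow (hproj 0 q) 5).const_mul ((1/20)*(12*c₁^3+15*c₁^2+3*c₁))).sub
          (((hproj 1 q).const_mul ((1/2)*c₁)).mul (hpow (hproj 0 q) 3))).sub
        (((hpow (hproj 1 q) 2).const_mul ((3/2)*c₁)).mul (hproj 0 q))).add
        ((hproj 2 q).mul (hproj 1 q))
    refine (pd_calc hA k).trans ?_
    simp [sgl, ContinuousLinearMap.add_apply, ContinuousLinearMap.smul_apply,
      ContinuousLinearMap.proj_apply, ContinuousLinearMap.smulRight_apply,
      ContinuousLinearMap.coe_sub', Pi.sub_apply, smul_eq_mul]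
    ring
  show pd j (pd k (AG26 c₁ 1)) p = _
  rw [h2]
  have hB : HasFDerivAt (fun q : Fin 3 → ℂ =>
      ((1/4)*(12*c₁^3+15*c₁^2+3*c₁)*(q 0)^4 - (3/2)*c₁*(q 0)^2*(q 1)
        - (3/2)*c₁*(q 1)^2) * sgl k 0
      + (q 2 - (1/2)*c₁*(q 0)^3 - 3*c₁*(q 0)*(q 1)) * sgl k 1
      + (q 1) * sgl k 2) _ p :=
    ((((((hpow (hproj 0 p) 4).const_mul ((1/4)*(12*c₁^3+15*c₁^2+3*c₁))).sub
          (((hpow (hproj 0 p) 2).const_mul ((3/2)*c₁)).mul (hproj 1 p))).sub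
        ((hpow (hproj 1 p) 2).const_mul ((3/2)*c₁))).mul_const (sgl k 0)).add
      ((((hproj 2 p).sub ((hpow (hproj 0 p) 3).const_mul ((1/2)*c₁))).sub
          (((hproj 0 p).const_mul (3*c₁)).mul (hproj 1 p))).mul_const (sgl k 1))).add
      ((hproj 1 p).mul_const (sgl k 2))
  refine (pd_calc hB j).trans ?_
  simp [sgl, ContinuousLinearMap.add_apply, ContinuousLinearMap.smul_apply,
    ContinuousLinearMap.proj_apply, ContinuousLinearMap.smulRight_apply,
    ContinuousLinearMap.coe_sub', Pi.sub_apply, smul_eq_mul]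
  ring

lemma cG26_eq₂ (c₁ : ℂ) (j k : Fin 3) (p : Fin 3 → ℂ) :
    cG26 c₁ 2 j k p =
      (-(3/8)*(96*c₁^4+96*c₁^3+36*c₁^2+6*c₁)*(p 0)^4
        + 54*c₁*(c₁+1/2)*(c₁+1/4)*(p 0)^2*(p 1)
        - 9*c₁*(c₁+1/2)*(p 1)^2) * (sgl j 0 * sgl k 0)
      + (18*c₁*(c₁+1/2)*(c₁+1/4)*(p 0)^3 - 18*c₁*(c₁+1/2)*(p 0)*(p 1))
          * (sgl j 0 * sgl k 1 + sgl j 1 * sgl k 0)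
      + (-9*c₁*(c₁+1/2)*(p 0)^2 + ((9/2)*c₁+9/4)*(p 1)) * (sgl j 1 * sgl k 1)
      + (sgl j 2 * sgl k 2) := by
  have h2 : pd k (AG26 c₁ 2) = fun q : Fin 3 → ℂ =>
      (18*c₁*(c₁+1/2)*(c₁+1/4)*(q 0)^3*(q 1)
        - (3/40)*(96*c₁^4+96*c₁^3+36*c₁^2+6*c₁)*(q 0)^5
        - 9*c₁*(c₁+1/2)*(q 0)*(q 1)^2) * sgl k 0
      + ((9/2)*c₁*(c₁+1/2)*(c₁+1/4)*(q 0)^4 - 9*c₁*(c₁+1/2)*(q 0)^2*(q 1)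
        + ((9/4)*c₁+9/8)*(q 1)^2) * sgl k 1
      + (q 2) * sgl k 2 := by
    funext q
    have hA : HasFDerivAt (AG26 c₁ 2) _ q :=
      ((((((hpow (hproj 2 q) 2).const_mul (1/2)).sub
            ((hpow (hproj 0 q) 6).const_mul
              ((1/80)*(96*c₁^4+96*c₁^3+36*c₁^2+6*c₁)))).add
          (((hproj 1 q).const_mul ((9/2)*c₁*(c₁+1/2)*(c₁+1/4))).mul
            (hpow (hproj 0 q) 4))).sub
        (((hpow (hproj 1 q) 2).const_mul ((9/2)*c₁*(c₁+1/2))).mul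
          (hpow (hproj 0 q) 2))).add
        ((hpow (hproj 1 q) 3).const_mul ((3/4)*c₁))).add
        ((hpow (hproj 1 q) 3).const_mul (3/8))
    refine (pd_calc hA k).trans ?_
    simp [sgl, ContinuousLinearMap.add_apply, ContinuousLinearMap.smul_apply,
      ContinuousLinearMap.proj_apply, ContinuousLinearMap.smulRight_apply,
      ContinuousLinearMap.coe_sub', Pi.sub_apply, smul_eq_mul]
    ring
  show pd j (pd k (AG26 c₁ 2)) p = _
  rw [h2]
  have hB : HasFDerivAt (fun q : Fin 3 → ℂ =>
      (18*c₁*(c₁+1/2)*(c₁+1/4)*(q 0)^3*(q 1)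
        - (3/40)*(96*c₁^4+96*c₁^3+36*c₁^2+6*c₁)*(q 0)^5
        - 9*c₁*(c₁+1/2)*(q 0)*(q 1)^2) * sgl k 0
      + ((9/2)*c₁*(c₁+1/2)*(c₁+1/4)*(q 0)^4 - 9*c₁*(c₁+1/2)*(q 0)^2*(q 1)
        + ((9/4)*c₁+9/8)*(q 1)^2) * sgl k 1
      + (q 2) * sgl k 2) _ p :=
    (((((((hpow (hproj 0 p) 3).const_mul (18*c₁*(c₁+1/2)*(c₁+1/4))).mul
            (hproj 1 p)).sub
          ((hpow (hproj 0 p) 5).const_mul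
            ((3/40)*(96*c₁^4+96*c₁^3+36*c₁^2+6*c₁)))).sub
        (((hproj 0 p).const_mul (9*c₁*(c₁+1/2))).mul
          (hpow (hproj 1 p) 2))).mul_const (sgl k 0)).add
      (((((hpow (hproj 0 p) 4).const_mul ((9/2)*c₁*(c₁+1/2)*(c₁+1/4))).sub
          (((hpow (hproj 0 p) 2).const_mul (9*c₁*(c₁+1/2))).mul (hproj 1 p))).add
        ((hpow (hproj 1 p) 2).const_mul ((9/4)*c₁+9/8))).mul_const (sgl k 1))).add
      ((hproj 2 p).mul_const (sgl k 2))
  refine (pd_calc hB j).trans ?_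
  simp [sgl, ContinuousLinearMap.add_apply, ContinuousLinearMap.smul_apply,
    ContinuousLinearMap.proj_apply, ContinuousLinearMap.smulRight_apply,
    ContinuousLinearMap.coe_sub', Pi.sub_apply, smul_eq_mul]
  ring

set_option maxHeartbeats 1000000 in
lemma assoc0 (c₁ : ℂ) (p : Fin 3 → ℂ) (j k m : Fin 3) :
    (∑ l, cG26 c₁ 0 j l p * cG26 c₁ l k m p) = ∑ l, cG26 c₁ 0 k l p * cG26 c₁ l j m p := by
  simp only [Fin.sum_univ_three, cG26_eq₀, cG26_eq₁, cG26_eq₂,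
    sgl00, sgl01, sgl02, sgl10, sgl11, sgl12, sgl20, sgl21, sgl22]
  ring

set_option maxHeartbeats 1000000 in
lemma assoc1 (c₁ : ℂ) (p : Fin 3 → ℂ) (j k m : Fin 3) :
    (∑ l, cG26 c₁ 1 j l p * cG26 c₁ l k m p) = ∑ l, cG26 c₁ 1 k l p * cG26 c₁ l j m p := by
  simp only [Fin.sum_univ_three, cG26_eq₀, cG26_eq₁, cG26_eq₂,
    sgl00, sgl01, sgl02, sgl10, sgl11, sgl12, sgl20, sgl21, sgl22]
  ring

set_option maxHeartbeats 1000000 in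
lemma assoc2 (c₁ : ℂ) (p : Fin 3 → ℂ) (j k m : Fin 3) :
    (∑ l, cG26 c₁ 2 j l p * cG26 c₁ l k m p) = ∑ l, cG26 c₁ 2 k l p * cG26 c₁ l j m p := by
  simp only [Fin.sum_univ_three, cG26_eq₀, cG26_eq₁, cG26_eq₂,
    sgl00, sgl01, sgl02, sgl10, sgl11, sgl12, sgl20, sgl21, sgl22]
  ring

lemma unit0 (c₁ : ℂ) (p : Fin 3 → ℂ) (i : Fin 3) : cG26 c₁ 0 2 i p = sgl i 0 := by
  rw [cG26_eq₀, sgl20, sgl21, sgl22]; ring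

lemma unit1 (c₁ : ℂ) (p : Fin 3 → ℂ) (i : Fin 3) : cG26 c₁ 1 2 i p = sgl i 1 := by
  rw [cG26_eq₁, sgl20, sgl21, sgl22]; ring

lemma unit2 (c₁ : ℂ) (p : Fin 3 → ℂ) (i : Fin 3) : cG26 c₁ 2 2 i p = sgl i 2 := by
  rw [cG26_eq₂, sgl20, sgl21, sgl22]; ring

lemma sgl_comm_if (i a : Fin 3) : sgl i a = if i = a then 1 else 0 := by
  rw [sgl_eq]; exact if_congr eq_comm rfl rfl

noncomputable def ηm : Matrix (Fin 3) (Fin 3) ℂ := ![![0,0,2],![0,3,0],![2,0,0]]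

lemma inv_aux (p : Fin 3 → ℂ) (k : Fin 3) (i j : Fin 3) :
    (∑ l, ηm i l * cG26 (-1/4 : ℂ) l j k p) = ∑ l, ηm j l * cG26 (-1/4 : ℂ) l i k p := by
  have h01 : (∑ l, ηm 0 l * cG26 (-1/4 : ℂ) l 1 k p) = ∑ l, ηm 1 l * cG26 (-1/4 : ℂ) l 0 k p := by
    simp [ηm, Fin.sum_univ_three, cG26_eq₀, cG26_eq₁, cG26_eq₂,
      sgl00, sgl01, sgl02, sgl10, sgl11, sgl12, sgl20, sgl21, sgl22,
      Matrix.cons_val_zero, Matrix.cons_val_one, Matrix.head_cons,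
      Matrix.cons_val_two, Matrix.vecHead, Matrix.vecTail]
    ring
  have h02 : (∑ l, ηm 0 l * cG26 (-1/4 : ℂ) l 2 k p) = ∑ l, ηm 2 l * cG26 (-1/4 : ℂ) l 0 k p := by
    simp [ηm, Fin.sum_univ_three, cG26_eq₀, cG26_eq₁, cG26_eq₂,
      sgl00, sgl01, sgl02, sgl10, sgl11, sgl12, sgl20, sgl21, sgl22,
      Matrix.cons_val_zero, Matrix.cons_val_one, Matrix.head_cons,
      Matrix.cons_val_two, Matrix.vecHead, Matrix.vecTail]
    ring
  have h12 : (∑ l, ηm 1 l * cG26 (-1/4 : ℂ) l 2 k p) = ∑ l, ηm 2 l * cG26 (-1/4 : ℂ) l 1 k p := by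
    simp [ηm, Fin.sum_univ_three, cG26_eq₀, cG26_eq₁, cG26_eq₂,
      sgl00, sgl01, sgl02, sgl10, sgl11, sgl12, sgl20, sgl21, sgl22,
      Matrix.cons_val_zero, Matrix.cons_val_one, Matrix.head_cons,
      Matrix.cons_val_two, Matrix.vecHead, Matrix.vecTail]
    ring
  fin_cases i <;> fin_cases j
  · rfl
  · exact h01
  · exact h02
  · exact h01.symm
  · rfl
  · exact h12
  · exact h02.symm
  · exact h12.symm
  · rfl


/-- For each value of the parameter `c₁`, the `G₂₆` family of vector potentials satisfies
the oriented associativity equations with unit `e = ∂/∂u₃`, and the structure constants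
admit a compatible constant non-degenerate symmetric invariant metric `η`
(`η_{il}cˡ_{jk}` totally symmetric) if and only if `c₁ = -1/4`. -/
theorem G26_family_oriented_associativity_and_metric (c₁ : ℂ) :
    -- oriented associativity
    (∀ (p : Fin 3 → ℂ) (i j k m : Fin 3),
      (∑ l, cG26 c₁ i j l p * cG26 c₁ l k m p) = ∑ l, cG26 c₁ i k l p * cG26 c₁ l j m p) ∧
    -- e = ∂/∂u₃ is the unit: ∂₃∂_i A^j = δ^j_i
    (∀ (p : Fin 3 → ℂ) (i j : Fin 3),
      cG26 c₁ j 2 i p = if i = j then (1 : ℂ) else 0) ∧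
    -- existence of a compatible constant invariant metric iff c₁ = -1/4
    ((∃ η : Matrix (Fin 3) (Fin 3) ℂ,
        (∀ i j, η i j = η j i) ∧ IsUnit η.det ∧
        (∀ (p : Fin 3 → ℂ) (i j k : Fin 3),
          (∑ l, η i l * cG26 c₁ l j k p) = ∑ l, η j l * cG26 c₁ l i k p))
      ↔ c₁ = -1/4) := by
  refine ⟨?_, ?_, ?_⟩
  · intro p i j k m
    fin_cases i
    · exact assoc0 c₁ p j k m
    · exact assoc1 c₁ p j k m
    · exact assoc2 c₁ p j k m
  · intro p i j
    fin_cases j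
    · exact (unit0 c₁ p i).trans (sgl_comm_if i 0)
    · exact (unit1 c₁ p i).trans (sgl_comm_if i 1)
    · exact (unit2 c₁ p i).trans (sgl_comm_if i 2)
  · constructor
    · rintro ⟨η, hsym, hdet, hinv⟩
      by_contra hc
      have h1 := hinv (fun _ => 0) 0 2 0
      have h2 := hinv (fun _ => 0) 1 2 0
      have h3 := hinv (fun _ => 0) 1 2 1
      have h4 := hinv ![0,1,0] 0 1 1
      simp only [Fin.sum_univ_three, cG26_eq₀, cG26_eq₁, cG26_eq₂,
        sgl00, sgl01, sgl02, sgl10, sgl11, sgl12, sgl20, sgl21, sgl22,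
        Matrix.cons_val_zero, Matrix.cons_val_one, Matrix.head_cons] at h1 h2 h3 h4
      norm_num at h1 h2 h3 h4
      have h5 : (9*c₁ + 9/4) * η 0 2 = 0 := by
        linear_combination h4 - (3/2) * h1 - 3*c₁*h3 - (9/2)*c₁*(hsym 2 0)
      have h02 : η 0 2 = 0 := by
        rcases mul_eq_zero.mp h5 with h | h
        · exact absurd (by linear_combination (1/9) * h) hc
        · exact h
      have h01 : η 0 1 = 0 := (hsym 0 1).trans h2
      have hrow : ∀ jj, η 0 jj = 0 := by
        intro jj; fin_cases jj
        · exact h1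
        · exact h01
        · exact h02
      exact hdet.ne_zero (Matrix.det_eq_zero_of_row_eq_zero 0 hrow)
    · intro hc
      subst hc
      refine ⟨ηm, ?_, ?_, ?_⟩
      · intro i j; fin_cases i <;> fin_cases j <;> rfl
      · have hd : ηm.det = -12 := by
          rw [Matrix.det_fin_three]; norm_num [ηm, Matrix.cons_val_two, Matrix.tail_cons, Matrix.head_cons]
        rw [hd]
        exact isUnit_iff_ne_zero.mpr (by norm_num)
      · intro p i j k
        exact inv_aux p k i j
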